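/- Let φ: ℂ[p, q, t^{±1}]/(pq − (1−t)) → ℂ[x^{±1}, y^{±1}] be the algebra homomorphism with φ(p) = x, φ(q) = (1+y)x^{-1}, φ(t) = −y. If F lies in the image of φ and F = Σ_{k ∈ ℤ} x^k·F_k(y) is its expansion with F_k ∈ ℂ[y^{±1}], then for every k ≥ 1 the coefficient F_{−k}(y) is divisible by (1 + y)^k in ℂ[y^{±1}]. -/

import Mathlib

noncomputable section

open MvPolynomial

/-- The relations defining A = ℂ[p,q,t,t⁻¹]/(pq − (1 − t)): the variables are
p = X 0, q = X 1, t = X 2, s = X 3 (s playing the role of t⁻¹). -/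
def ARel : Ideal (MvPolynomial (Fin 4) ℂ) :=
  Ideal.span {X 0 * X 1 - (1 - X 2), X 2 * X 3 - 1}

/-- The ring A = ℂ[p,q,t,t⁻¹]/(pq − (1 − t)). -/
abbrev ARing := MvPolynomial (Fin 4) ℂ ⧸ ARel

/-- The generator p of A. -/
def pA : ARing := Ideal.Quotient.mk ARel (X 0)
/-- The generator q of A. -/
def qA : ARing := Ideal.Quotient.mk ARel (X 1)
/-- The generator t of A. -/
def tA : ARing := Ideal.Quotient.mk ARel (X 2)
/-- The generator t⁻¹ of A. -/
def sA : ARing := Ideal.Quotient.mk ARel (X 3)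

/-- The Laurent polynomial ring ℂ[x^{±1}, y^{±1}]. -/
abbrev LaurentTwo := AddMonoidAlgebra ℂ (ℤ × ℤ)

/-- The monomial x. -/
def xL : LaurentTwo := AddMonoidAlgebra.single (1, 0) 1
/-- The monomial x⁻¹. -/
def xLinv : LaurentTwo := AddMonoidAlgebra.single (-1, 0) 1
/-- The monomial y. -/
def yL : LaurentTwo := AddMonoidAlgebra.single (0, 1) 1

/-- The coefficient F_k ∈ ℂ[y^{±1}] in the expansion F = Σ_k x^k F_k(y) of a Laurent
polynomial F ∈ ℂ[x^{±1}, y^{±1}]. -/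
def sliceX (F : LaurentTwo) (k : ℤ) : AddMonoidAlgebra ℂ ℤ :=
  AddMonoidAlgebra.ofCoeff (Finsupp.comapDomain (fun j : ℤ => (k, j)) F.coeff
    (Function.Injective.injOn (fun a b h => by simpa using h)))


/-! ### Auxiliary machinery -/

/-- Laurent polynomials in `y`. -/
abbrev LY := AddMonoidAlgebra ℂ ℤ
/-- Laurent polynomials in `x` with coefficients Laurent polynomials in `y`. -/
abbrev TT := AddMonoidAlgebra LY ℤ

/-- The divisor `1 + y`. -/
def DD : LY := 1 + AddMonoidAlgebra.single (1 : ℤ) (1 : ℂ)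

/-- The monoid map sending `(i, j)` to `x^i y^j`. -/
def fmon : Multiplicative (ℤ × ℤ) →* TT where
  toFun g := AddMonoidAlgebra.single (Multiplicative.toAdd g).1
      (AddMonoidAlgebra.single (Multiplicative.toAdd g).2 (1 : ℂ))
  map_one' := by
    simp only [toAdd_one, Prod.fst_zero, Prod.snd_zero]
    rfl
  map_mul' g h := by
    simp only [toAdd_mul, Prod.fst_add, Prod.snd_add]
    rw [AddMonoidAlgebra.single_mul_single, AddMonoidAlgebra.single_mul_single, one_mul]

/-- The canonical algebra map regrouping `ℂ[x^{±1}, y^{±1}]` by powers of `x`. -/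
def ψ : LaurentTwo →ₐ[ℂ] TT := AddMonoidAlgebra.lift ℂ TT (ℤ × ℤ) fmon

theorem psi_single (a : ℤ × ℤ) (c : ℂ) :
    ψ (AddMonoidAlgebra.single a c)
      = c • AddMonoidAlgebra.single a.1 (AddMonoidAlgebra.single a.2 (1 : ℂ)) := by
  show (AddMonoidAlgebra.lift ℂ TT (ℤ × ℤ) fmon) (AddMonoidAlgebra.single a c) = _
  rw [AddMonoidAlgebra.lift_single]
  rfl

theorem psi_single' (a : ℤ × ℤ) (c : ℂ) :
    ψ (AddMonoidAlgebra.single a c)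
      = AddMonoidAlgebra.single a.1 (AddMonoidAlgebra.single a.2 c) := by
  rw [psi_single, AddMonoidAlgebra.smul_single, AddMonoidAlgebra.smul_single', mul_one]

theorem psi_apply (F : LaurentTwo) (k j : ℤ) :
    ((ψ F).coeff k).coeff j = F.coeff (k, j) := by
  induction F using AddMonoidAlgebra.induction_linear with
  | zero => simp
  | add f g hf hg =>
    rw [map_add, AddMonoidAlgebra.coeff_add, Finsupp.add_apply, AddMonoidAlgebra.coeff_add,
      Finsupp.add_apply, hf, hg, AddMonoidAlgebra.coeff_add, Finsupp.add_apply]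
  | single a c =>
    rw [psi_single']
    obtain ⟨a1, a2⟩ := a
    by_cases h1 : a1 = k <;> by_cases h2 : a2 = j <;>
      simp only [AddMonoidAlgebra.coeff_single, AddMonoidAlgebra.coeff_zero, Finsupp.single_apply,
        Finsupp.zero_apply, Prod.mk.injEq, h1, h2, eq_self_iff_true, if_true, if_false, and_true,
        true_and, and_false, false_and]

theorem toNat_neg_add (i j : ℤ) : (-(i + j)).toNat ≤ (-i).toNat + (-j).toNat := by omega

/-- The subalgebra of `TT` whose coefficient of `x^{-k}` is divisible by `(1+y)^k`. -/
def SS : Subalgebra ℂ TT where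
  carrier := {g | ∀ k : ℤ, DD ^ (-k).toNat ∣ g.coeff k}
  add_mem' {f g} hf hg k := by
    rw [AddMonoidAlgebra.coeff_add, Finsupp.add_apply]; exact dvd_add (hf k) (hg k)
  mul_mem' {f g} hf hg k := by
    classical
    rw [AddMonoidAlgebra.coeff_mul]
    refine Finset.dvd_sum fun i hi => Finset.dvd_sum fun j hj => ?_
    simp only []
    split_ifs with h
    · calc DD ^ (-k).toNat ∣ DD ^ ((-i).toNat + (-j).toNat) :=
            pow_dvd_pow _ (by rw [← h]; exact toNat_neg_add i j)
        _ = DD ^ (-i).toNat * DD ^ (-j).toNat := pow_add _ _ _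
        _ ∣ f.coeff i * g.coeff j := mul_dvd_mul (hf i) (hg j)
    · exact dvd_zero _
  algebraMap_mem' c k := by
    show DD ^ (-k).toNat ∣ (AddMonoidAlgebra.single (0:ℤ) (algebraMap ℂ LY c)).coeff k
    rw [AddMonoidAlgebra.coeff_single, Finsupp.single_apply]
    split_ifs with h
    · rw [← h]; simp only [neg_zero, Int.toNat_zero, pow_zero]; exact one_dvd _
    · exact dvd_zero _

theorem TT_single_mul (i j : ℤ) (a b : LY) :
    (AddMonoidAlgebra.single i a : TT) * AddMonoidAlgebra.single j b
      = AddMonoidAlgebra.single (i + j) (a * b) :=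
  AddMonoidAlgebra.single_mul_single ..

theorem LY_single_mul (i j : ℤ) (a b : ℂ) :
    (AddMonoidAlgebra.single i a : LY) * AddMonoidAlgebra.single j b
      = AddMonoidAlgebra.single (i + j) (a * b) :=
  AddMonoidAlgebra.single_mul_single ..

theorem single_mem_SS (i : ℤ) (a : LY) (h : DD ^ (-i).toNat ∣ a) :
    (AddMonoidAlgebra.single i a : TT) ∈ SS := by
  intro k
  show DD ^ (-k).toNat ∣ (AddMonoidAlgebra.single i a : TT).coeff k
  rw [AddMonoidAlgebra.coeff_single, Finsupp.single_apply]
  split_ifs with hik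
  · rwa [← hik]
  · exact dvd_zero _

/-- If F is in the image of the surgery homomorphism φ (φ(p) = x, φ(q) = (1+y)x⁻¹,
φ(t) = −y), then in the expansion F = Σ_k x^k F_k(y) the coefficient F_{−k} is
divisible by (1 + y)^k for every k ≥ 1. -/
theorem image_divisibility (φ : ARing →ₐ[ℂ] LaurentTwo)
    (hp : φ pA = xL) (hq : φ qA = (1 + yL) * xLinv) (ht : φ tA = -yL)
    (F : LaurentTwo) (hF : F ∈ Set.range φ) (k : ℕ) (hk : 1 ≤ k) :
    (1 + AddMonoidAlgebra.single (1 : ℤ) (1 : ℂ)) ^ k ∣ sliceX F (-(k : ℤ)) := by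
  classical
  -- identify composites
  set χ : MvPolynomial (Fin 4) ℂ →ₐ[ℂ] TT :=
    ψ.comp (φ.comp (Ideal.Quotient.mkₐ ℂ ARel)) with hχ
  -- value of φ on sA
  have hts : tA * sA = (1 : ARing) := by
    show Ideal.Quotient.mk ARel (X 2) * Ideal.Quotient.mk ARel (X 3) = 1
    rw [← map_mul, ← map_one (Ideal.Quotient.mk ARel), Ideal.Quotient.eq]
    exact Ideal.subset_span (Set.mem_insert_of_mem _ rfl)
  -- ψ values of the generators
  have hψx : ψ xL = AddMonoidAlgebra.single (1:ℤ) (AddMonoidAlgebra.single (0:ℤ) (1:ℂ)) := by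
    rw [show xL = AddMonoidAlgebra.single ((1:ℤ), (0:ℤ)) 1 from rfl]; exact psi_single' _ _
  have hψy : ψ yL = AddMonoidAlgebra.single (0:ℤ) (AddMonoidAlgebra.single (1:ℤ) (1:ℂ)) := by
    rw [show yL = AddMonoidAlgebra.single ((0:ℤ), (1:ℤ)) 1 from rfl]; exact psi_single' _ _
  have hψxinv : ψ xLinv = AddMonoidAlgebra.single (-1:ℤ) (AddMonoidAlgebra.single (0:ℤ) (1:ℂ)) := by
    rw [show xLinv = AddMonoidAlgebra.single ((-1:ℤ), (0:ℤ)) 1 from rfl]; exact psi_single' _ _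
  have hone : (1 : TT) = AddMonoidAlgebra.single (0:ℤ) (1 : LY) := rfl
  have honeLY : (1 : LY) = AddMonoidAlgebra.single (0:ℤ) (1 : ℂ) := rfl
  -- ψ (φ q) = single (-1) DD
  have hq' : ψ (φ qA) = AddMonoidAlgebra.single (-1 : ℤ) DD := by
    rw [hq, map_mul, map_add, map_one, hψy, hψxinv, hone]
    rw [show (AddMonoidAlgebra.single (0:ℤ) (1:LY)
          + AddMonoidAlgebra.single (0:ℤ) (AddMonoidAlgebra.single (1:ℤ) (1:ℂ)) : TT)
        = AddMonoidAlgebra.single (0:ℤ) DD by rw [← AddMonoidAlgebra.single_add]; rfl]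
    rw [TT_single_mul, ← honeLY, mul_one]
    norm_num
  -- ψ (φ t) and ψ (φ s)
  have htv : ψ (φ tA) = AddMonoidAlgebra.single (0:ℤ) (AddMonoidAlgebra.single (1:ℤ) (-1:ℂ)) := by
    rw [ht, map_neg, hψy, ← AddMonoidAlgebra.single_neg, ← AddMonoidAlgebra.single_neg]
  set u : TT := AddMonoidAlgebra.single (0:ℤ) (AddMonoidAlgebra.single (-1:ℤ) (-1:ℂ)) with hu
  have htu : ψ (φ tA) * u = 1 := by
    rw [htv, hu, TT_single_mul, LY_single_mul]
    norm_num [hone, honeLY]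
  have hsv : ψ (φ sA) = u := by
    have h1 : ψ (φ tA) * ψ (φ sA) = 1 := by
      rw [← map_mul, ← map_mul, hts, map_one, map_one]
    calc ψ (φ sA) = (ψ (φ tA) * u) * ψ (φ sA) := by rw [htu, one_mul]
      _ = (ψ (φ tA) * ψ (φ sA)) * u := by rw [mul_right_comm]
      _ = u := by rw [h1, one_mul]
  -- the image of χ lies in SS
  have key : ∀ P : MvPolynomial (Fin 4) ℂ, χ P ∈ SS := by
    intro P
    have htop : Algebra.adjoin ℂ (Set.range (X : Fin 4 → MvPolynomial (Fin 4) ℂ))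
        ≤ SS.comap χ := by
      apply Algebra.adjoin_le
      rintro _ ⟨i, rfl⟩
      show X i ∈ Subalgebra.comap χ SS
      rw [Subalgebra.mem_comap]
      fin_cases i
      · show χ (X 0) ∈ SS
        have : χ (X 0) = ψ (φ pA) := rfl
        rw [this, hp, hψx]
        refine single_mem_SS 1 _ ?_
        show DD ^ (0:ℕ) ∣ _
        rw [pow_zero]; exact one_dvd _
      · show χ (X 1) ∈ SS
        have : χ (X 1) = ψ (φ qA) := rfl
        rw [this, hq']
        refine single_mem_SS (-1) _ ?_
        norm_num
      · show χ (X 2) ∈ SS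
        have : χ (X 2) = ψ (φ tA) := rfl
        rw [this, htv]
        exact single_mem_SS 0 _ (by norm_num)
      · show χ (X 3) ∈ SS
        have : χ (X 3) = ψ (φ sA) := rfl
        rw [this, hsv, hu]
        exact single_mem_SS 0 _ (by norm_num)
    have : P ∈ Algebra.adjoin ℂ (Set.range (X : Fin 4 → MvPolynomial (Fin 4) ℂ)) := by
      rw [MvPolynomial.adjoin_range_X]; trivial
    exact (Subalgebra.mem_comap _ _ _).mp (htop this)
  -- conclude
  obtain ⟨a, rfl⟩ := hF
  obtain ⟨P, rfl⟩ := Ideal.Quotient.mk_surjective (I := ARel) a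
  have hmem : ψ (φ (Ideal.Quotient.mk ARel P)) ∈ SS := key P
  have hdvd := hmem (-(k : ℤ))
  have hslice : sliceX (φ (Ideal.Quotient.mk ARel P)) (-(k : ℤ))
      = (ψ (φ (Ideal.Quotient.mk ARel P))).coeff (-(k : ℤ)) := by
    ext j
    rw [psi_apply]
    rfl
  rw [hslice]
  have : (-(-(k:ℤ))).toNat = k := by omega
  rw [this] at hdvd
  exact hdvd
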